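/- Let X be a group, π a set of primes, and Y an 𝓕_π-separable subgroup of X. If every subgroup M ∈ Ω_π(Y) (normal in Y with Y/M a finite π-group, and of finite index) is 𝓕_π-separable in X, then X is 𝓕_π-quasi-regular by Y: for each M ∈ Ω_π(Y) there exists N ∈ Ω_π(X) with N ∩ Y ≤ M. -/

import Mathlib

open Pointwise

def IsPiNumber (π : Set ℕ) (n : ℕ) : Prop := n ≠ 0 ∧ ∀ p : ℕ, p.Prime → p ∣ n → p ∈ π

def IsPiPrimeNumber (π : Set ℕ) (n : ℕ) : Prop := n ≠ 0 ∧ ∀ p : ℕ, p.Prime → p ∣ n → p ∉ π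

/-- `N` is a normal subgroup of finite π-index, i.e. `N ∈ Ω_π(X)`. -/
def InOmega (π : Set ℕ) {X : Type*} [Group X] (N : Subgroup X) : Prop :=
  N.Normal ∧ IsPiNumber π N.index

/-- `Y` is separable by the family `F` of subgroups. -/
def SepBy {X : Type*} [Group X] (F : Set (Subgroup X)) (Y : Subgroup X) : Prop :=
  (⋂ N ∈ F, (Y : Set X) * (N : Set X)) = (Y : Set X)

/-- `Y` is 𝓕_π-separable in `X`. -/
def SepIn (π : Set ℕ) {X : Type*} [Group X] (Y : Subgroup X) : Prop :=
  SepBy {N : Subgroup X | InOmega π N} Y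

/-- `Y` is π'-isolated in `X`. -/
def Isolated (π : Set ℕ) {X : Type*} [Group X] (Y : Subgroup X) : Prop :=
  ∀ x : X, ∀ q : ℕ, IsPiPrimeNumber π q → x ^ q ∈ Y → x ∈ Y

/-- `X` is residually a finite π-group. -/
def ResiduallyPi (π : Set ℕ) (X : Type*) [Group X] : Prop :=
  ∀ x : X, x ≠ 1 → ∃ N : Subgroup X, InOmega π N ∧ x ∉ N

/-- If `Y` is 𝓕_π-separable in `X` and all subgroups of `Ω_π(Y)` are 𝓕_π-separable
in `X`, then `X` is 𝓕_π-quasi-regular by `Y`. -/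
lemma aux_index_inf_dvd {X : Type*} [Group X] (A B : Subgroup X) [A.Normal] [B.Normal]
    (hA : A.index ≠ 0) (hB : B.index ≠ 0) : (A ⊓ B).index ∣ A.index * B.index := by
  have : A.FiniteIndex := ⟨hA⟩
  have : B.FiniteIndex := ⟨hB⟩
  set φ := (QuotientGroup.mk' A).prod (QuotientGroup.mk' B) with hφ
  have hker : φ.ker = A ⊓ B := by
    rw [hφ, MonoidHom.ker_prod, QuotientGroup.ker_mk', QuotientGroup.ker_mk']
  have h1 : (A ⊓ B).index = Nat.card φ.range := by rw [← hker, Subgroup.index_ker]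
  rw [h1]
  calc Nat.card φ.range ∣ Nat.card ((X ⧸ A) × (X ⧸ B)) := Subgroup.card_subgroup_dvd_card _
    _ = A.index * B.index := by rw [Nat.card_prod]; rfl

lemma aux_inOmega_top (π : Set ℕ) {X : Type*} [Group X] : InOmega π (⊤ : Subgroup X) := by
  refine ⟨inferInstance, ?_, fun p hp hd => ?_⟩
  · rw [Subgroup.index_top]; exact one_ne_zero
  · rw [Subgroup.index_top] at hd
    exact absurd (Nat.eq_one_of_dvd_one hd) hp.one_lt.ne'

lemma aux_inOmega_inf (π : Set ℕ) {X : Type*} [Group X] {A B : Subgroup X}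
    (hA : InOmega π A) (hB : InOmega π B) : InOmega π (A ⊓ B) := by
  haveI := hA.1; haveI := hB.1
  refine ⟨inferInstance, Subgroup.index_inf_ne_zero hA.2.1 hB.2.1, fun p hp hd => ?_⟩
  have := hd.trans (aux_index_inf_dvd A B hA.2.1 hB.2.1)
  rcases (Nat.Prime.dvd_mul hp).mp this with h | h
  · exact hA.2.2 p hp h
  · exact hB.2.2 p hp h

lemma aux_inOmega_finsetInf (π : Set ℕ) {X : Type*} [Group X] {ι : Type*} (s : Finset ι)
    (f : ι → Subgroup X) (h : ∀ i ∈ s, InOmega π (f i)) : InOmega π (s.inf f) := by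
  induction s using Finset.cons_induction with
  | empty => simpa using aux_inOmega_top π
  | cons a s ha ih =>
    rw [Finset.inf_cons]
    exact aux_inOmega_inf π (h a (Finset.mem_cons_self a s))
      (ih fun i hi => h i (Finset.mem_cons_of_mem hi))

theorem quasiRegular_of_sep (π : Set ℕ) {X : Type*} [Group X] (Y : Subgroup X)
    (hY : SepIn π Y)
    (hsep : ∀ M : Subgroup X, M ≤ Y →
      (M.subgroupOf Y).Normal → IsPiNumber π (M.subgroupOf Y).index → SepIn π M) :
    ∀ M : Subgroup X, M ≤ Y →
      (M.subgroupOf Y).Normal → IsPiNumber π (M.subgroupOf Y).index →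
      ∃ N : Subgroup X, InOmega π N ∧ N ⊓ Y ≤ M := by
  intro M hM hnorm hidx
  haveI : (M.subgroupOf Y).FiniteIndex := ⟨hidx.1⟩
  haveI : Finite (Y ⧸ M.subgroupOf Y) := Subgroup.finite_quotient_of_finiteIndex
  haveI : Fintype (Y ⧸ M.subgroupOf Y) := Fintype.ofFinite _
  have hSep : (⋂ N ∈ {N : Subgroup X | InOmega π N}, (M : Set X) * (N : Set X)) = (M : Set X) :=
    hsep M hM hnorm hidx
  have key : ∀ c : Y ⧸ M.subgroupOf Y, ∃ N : Subgroup X, InOmega π N ∧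
      (c ≠ 1 → ((c.out : Y) : X) ∉ (M : Set X) * (N : Set X)) := by
    intro c
    by_cases hc : c = 1
    · exact ⟨⊤, aux_inOmega_top π, fun h => absurd hc h⟩
    · have hout : ((c.out : Y) : X) ∉ (M : Set X) := by
        intro hmem
        apply hc
        have : (c.out : Y) ∈ M.subgroupOf Y := hmem
        rw [← QuotientGroup.out_eq' c]
        exact (QuotientGroup.eq_one_iff _).mpr this
      rw [← hSep] at hout
      simp only [Set.mem_iInter, not_forall] at hout
      obtain ⟨N, hN, hnot⟩ := hout
      exact ⟨N, hN, fun _ => hnot⟩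
  choose f hf1 hf2 using key
  refine ⟨Finset.univ.inf f, aux_inOmega_finsetInf π _ f (fun i _ => hf1 i), ?_⟩
  rintro x ⟨hxN, hxY⟩
  set c : Y ⧸ M.subgroupOf Y := QuotientGroup.mk ⟨x, hxY⟩ with hc
  by_cases h1 : c = 1
  · have : (⟨x, hxY⟩ : Y) ∈ M.subgroupOf Y := (QuotientGroup.eq_one_iff _).mp h1
    exact this
  · exfalso
    apply hf2 c h1
    have hmk : (QuotientGroup.mk c.out : Y ⧸ M.subgroupOf Y) = QuotientGroup.mk ⟨x, hxY⟩ :=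
      (QuotientGroup.out_eq' c).trans hc
    have hrel : (c.out : Y)⁻¹ * ⟨x, hxY⟩ ∈ M.subgroupOf Y := QuotientGroup.eq.mp hmk
    -- so (↑c.out')⁻¹ * x ∈ M
    have hm : ((c.out : Y) : X)⁻¹ * x ∈ M := hrel
    set m : X := x⁻¹ * (c.out : Y) with hmdef
    have hmM : m ∈ M := by
      have := M.inv_mem hm
      simpa [mul_inv_rev] using this
    have hxNc : x ∈ f c := (Finset.inf_le (Finset.mem_univ c) : Finset.univ.inf f ≤ f c) hxN
    have hconj : m⁻¹ * x * m ∈ f c := by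
      have := (hf1 c).1.conj_mem x hxNc m⁻¹
      simpa using this
    refine Set.mem_mul.mpr ⟨m, hmM, m⁻¹ * x * m, hconj, ?_⟩
    rw [hmdef]
    group
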